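/- The sequence m ↦ (2m + 1/2) · ( (2m−1)!! / (2m)!! )², m ∈ ℕ, is monotonically increasing: for every m, (2m + 1/2) · ((2m−1)!!/(2m)!!)² ≤ (2m + 5/2) · ((2m+1)!!/(2m+2)!!)². -/
import Mathlib


open Real Nat

/-- Monotonicity of the sequence `m ↦ (2m + 1/2) ((2m−1)!!/(2m)!!)²`:
each term is bounded by the next one, `(2m + 5/2) ((2m+1)!!/(2m+2)!!)²`. -/
theorem funk_radon_eigenvalue_seq_monotone (m : ℕ) :
    (2 * (m : ℝ) + 1 / 2) *
        ((Nat.doubleFactorial (2 * m - 1) : ℝ) / (Nat.doubleFactorial (2 * m) : ℝ)) ^ 2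
      ≤ (2 * (m : ℝ) + 5 / 2) *
        ((Nat.doubleFactorial (2 * m + 1) : ℝ) / (Nat.doubleFactorial (2 * m + 2) : ℝ)) ^ 2 := by
  have h1 : (Nat.doubleFactorial (2 * m + 1) : ℝ)
      = (2 * m + 1) * Nat.doubleFactorial (2 * m - 1) := by
    cases m with
    | zero => simp [Nat.doubleFactorial]
    | succ k =>
        rw [show 2 * (k + 1) + 1 = (2 * k + 1) + 2 by ring,
          Nat.doubleFactorial_add_two,
          show 2 * (k + 1) - 1 = 2 * k + 1 by omega]
        push_cast; ring
  have h2 : (Nat.doubleFactorial (2 * m + 2) : ℝ)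
      = (2 * m + 2) * Nat.doubleFactorial (2 * m) := by
    rw [Nat.doubleFactorial_add_two]; push_cast; ring
  set a : ℝ := (Nat.doubleFactorial (2 * m - 1) : ℝ) with ha
  set b : ℝ := (Nat.doubleFactorial (2 * m) : ℝ) with hb
  have hbpos : (0 : ℝ) < b := by
    rw [hb]; exact_mod_cast Nat.doubleFactorial_pos _
  have hapos : (0 : ℝ) < a := by
    rw [ha]; exact_mod_cast Nat.doubleFactorial_pos _
  rw [h1, h2]
  have key : (2 * (m : ℝ) + 1 / 2) * (2 * m + 2) ^ 2
      ≤ (2 * (m : ℝ) + 5 / 2) * (2 * m + 1) ^ 2 := by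
    nlinarith [Nat.cast_nonneg (α := ℝ) m]
  have hB : ((2 * (m : ℝ) + 2) * b) ≠ 0 := by positivity
  rw [div_pow, div_pow, ← mul_div_assoc, ← mul_div_assoc,
    div_le_div_iff₀ (by positivity) (by positivity)]
  have := mul_le_mul_of_nonneg_right key (by positivity : (0 : ℝ) ≤ a ^ 2 * b ^ 2)
  nlinarith [this]
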